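/- Let □ f := ∂_x² f − (1+x)∂_t² f on ℝ², and let f(x,t) = x² + t². Then □f(0,0) = 0 and ∂_x(□f)(0,0) = −2; hence f lies in the quasi-Trefftz space ℚ𝕌² centered at the origin (with ρ=1, G(x)=1+x) but not in ℚ𝕌³, proving that quasi-Trefftz spaces of increasing degree are not nested in general. -/

import Mathlib

/-- Partial derivative in the k-th coordinate. -/
noncomputable def pd (d : ℕ) (k : Fin d) (f : (Fin d → ℝ) → ℝ) : (Fin d → ℝ) → ℝ :=
  fun x => deriv (fun s => f (Function.update x k s)) (x k)

/-- Multi-index partial derivative D^i f. -/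
noncomputable def mderiv (d : ℕ) (i : Fin d → ℕ) (f : (Fin d → ℝ) → ℝ) : (Fin d → ℝ) → ℝ :=
  ((List.ofFn fun k : Fin d => (pd d k)^[i k]).foldr (· ∘ ·) id) f

/-- Taylor polynomial of order m+1 (degree ≤ m) of f centered at z. -/
noncomputable def taylorPoly (d m : ℕ) (z : Fin d → ℝ) (f : (Fin d → ℝ) → ℝ) :
    (Fin d → ℝ) → ℝ :=
  fun y => ∑ kk ∈ Finset.range (m + 1), ∑ i ∈ Finset.Nat.antidiagonalTuple d kk,
    ((∏ l, (y l - z l) ^ (i l)) / ((∏ l, Nat.factorial (i l) : ℕ) : ℝ)) * mderiv d i f z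

/-- Spatial part of a space–time point. -/
def spatial (n : ℕ) (x : Fin (n + 1) → ℝ) : Fin n → ℝ := fun k => x k.castSucc

/-- Wave operator □_{ρ,G} f = ∇·((1/ρ)∇f) − G ∂_t² f on space–time ℝ^n × ℝ. -/
noncomputable def boxOp (n : ℕ) (ρ G : (Fin n → ℝ) → ℝ) (f : (Fin (n + 1) → ℝ) → ℝ) :
    (Fin (n + 1) → ℝ) → ℝ :=
  fun x =>
    (∑ k : Fin n, pd (n + 1) k.castSucc
        (fun y => (ρ (spatial n y))⁻¹ * pd (n + 1) k.castSucc f y) x)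
      - G (spatial n x) * pd (n + 1) (Fin.last n) (pd (n + 1) (Fin.last n) f) x


/-- Wave operator □f = ∂_x²f − (1+x)∂_t²f (ρ = 1, G(x) = 1+x) centered at the origin. -/
noncomputable def boxG (f : (Fin 2 → ℝ) → ℝ) : (Fin 2 → ℝ) → ℝ :=
  fun x => mderiv 2 ![2, 0] f x - (1 + x 0) * mderiv 2 ![0, 2] f x


lemma mderiv2 (i : Fin 2 → ℕ) (f : (Fin 2 → ℝ) → ℝ) :
    mderiv 2 i f = (pd 2 0)^[i 0] ((pd 2 1)^[i 1] f) := by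
  simp [mderiv, List.ofFn_succ]

lemma pd0f : pd 2 0 (fun y : Fin 2 → ℝ => (y 0) ^ 2 + (y 1) ^ 2) = fun x => 2 * x 0 := by
  funext x
  simp [pd, Function.update]

lemma pd1f : pd 2 1 (fun y : Fin 2 → ℝ => (y 0) ^ 2 + (y 1) ^ 2) = fun x => 2 * x 1 := by
  funext x
  simp [pd, Function.update]

lemma pd00 : pd 2 0 (fun x : Fin 2 → ℝ => 2 * x 0) = fun _ => 2 := by
  funext x; simp [pd, Function.update]

lemma pd11 : pd 2 1 (fun x : Fin 2 → ℝ => 2 * x 1) = fun _ => 2 := by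
  funext x; simp [pd, Function.update]

lemma boxGf : boxG (fun y => (y 0) ^ 2 + (y 1) ^ 2) = fun x => -(2 * x 0) := by
  funext x
  simp [boxG, mderiv2, Function.iterate_succ_apply', pd0f, pd1f, pd00, pd11]
  ring

lemma pdbox : pd 2 0 (fun x : Fin 2 → ℝ => -(2 * x 0)) = fun _ => -2 := by
  funext x; simp [pd, Function.update]

/-- f(x,t) = x²+t² satisfies □f(0,0) = 0 and ∂_x(□f)(0,0) = −2, so f ∈ ℚ𝕌² but
f ∉ ℚ𝕌³: quasi-Trefftz spaces are not nested. -/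
theorem quasiTrefftz_not_nested :
    boxG (fun y => (y 0) ^ 2 + (y 1) ^ 2) 0 = 0 ∧
    mderiv 2 ![1, 0] (boxG (fun y => (y 0) ^ 2 + (y 1) ^ 2)) 0 = -2 ∧
    (∀ i : Fin 2 → ℕ, i 0 + i 1 ≤ 0 →
      mderiv 2 i (boxG (fun y => (y 0) ^ 2 + (y 1) ^ 2)) 0 = 0) ∧
    ¬(∀ i : Fin 2 → ℕ, i 0 + i 1 ≤ 1 →
      mderiv 2 i (boxG (fun y => (y 0) ^ 2 + (y 1) ^ 2)) 0 = 0) := by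
  refine ⟨by simp [boxGf], ?_, ?_, ?_⟩
  · rw [boxGf, mderiv2]
    simp [pdbox]
  · intro i hi
    have h0 : i 0 = 0 := by omega
    have h1 : i 1 = 0 := by omega
    rw [mderiv2, h0, h1, boxGf]
    simp
  · intro h
    have := h ![1, 0] (by simp)
    rw [boxGf, mderiv2] at this
    rw [show (![1,0] : Fin 2 → ℕ) 0 = 1 from rfl, show (![1,0] : Fin 2 → ℕ) 1 = 0 from rfl] at this
    simp [pdbox] at this
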